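/- Let (x*, X*) be an optimal solution of P_o^CPP. If Q is positive semidefinite and x* is feasible for P^MBQP (i.e., x* ≥ 0, a_jᵀx* = b_j for all j, and x*_k ∈ {0,1} for all k ∈ B), then x* is an optimal solution of P^MBQP. -/

import Mathlib

open Matrix BigOperators

/-- The completely positive cone: `M = A * Aᵀ` for some entrywise nonnegative matrix `A`. -/
def IsCP {ι : Type*} [Fintype ι] (M : Matrix ι ι ℝ) : Prop :=
  ∃ (r : ℕ) (A : Matrix ι (Fin r) ℝ), (∀ i j, 0 ≤ A i j) ∧ M = A * Aᵀ

/-- The bordered matrix `[[1, xᵀ],[x, X]]`. -/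
def border {ι : Type*} (x : ι → ℝ) (X : Matrix ι ι ℝ) :
    Matrix (Unit ⊕ ι) (Unit ⊕ ι) ℝ :=
  Matrix.fromBlocks 1 (Matrix.of fun _ j => x j) (Matrix.of fun i _ => x i) X

/-- Feasibility for the mixed-binary quadratic program `P^MBQP`. -/
def MBQPFeas {n m : ℕ} (a : Fin m → Fin n → ℝ) (b : Fin m → ℝ) (B : Set (Fin n))
    (x : Fin n → ℝ) : Prop :=
  (∀ j, a j ⬝ᵥ x = b j) ∧ (∀ k ∈ B, x k = 0 ∨ x k = 1) ∧ (∀ i, 0 ≤ x i)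

/-- Objective of `P^MBQP`: `xᵀQx + 2cᵀx`. -/
def MBQPObj {n : ℕ} (Q : Matrix (Fin n) (Fin n) ℝ) (c : Fin n → ℝ) (x : Fin n → ℝ) : ℝ :=
  x ⬝ᵥ (Q *ᵥ x) + 2 * (c ⬝ᵥ x)

/-- Feasibility for the completely positive reformulation `P_o^CPP`. -/
def CPPoFeas {n m : ℕ} (a : Fin m → Fin n → ℝ) (b : Fin m → ℝ) (B : Set (Fin n))
    (x : Fin n → ℝ) (X : Matrix (Fin n) (Fin n) ℝ) : Prop :=
  (∀ j, a j ⬝ᵥ x = b j) ∧ (∀ j, a j ⬝ᵥ (X *ᵥ a j) = (b j) ^ 2) ∧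
  (∀ k ∈ B, x k = X k k) ∧ IsCP (border x X)

/-- Objective of `P_o^CPP`: `Tr(QX) + 2cᵀx`. -/
def CPPoObj {n : ℕ} (Q : Matrix (Fin n) (Fin n) ℝ) (c : Fin n → ℝ)
    (x : Fin n → ℝ) (X : Matrix (Fin n) (Fin n) ℝ) : ℝ :=
  Matrix.trace (Q * X) + 2 * (c ⬝ᵥ x)

lemma trace_nonneg_of_psd {n : ℕ} {M : Matrix (Fin n) (Fin n) ℝ} (hM : M.PosSemidef) :
    0 ≤ M.trace := by
  refine Finset.sum_nonneg fun i _ => ?_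
  have := hM.dotProduct_mulVec_nonneg (Pi.single i 1)
  simpa [dotProduct, mulVec, Pi.single_apply, Finset.sum_ite_eq] using this

lemma trace_mul_nonneg {n : ℕ} {Q M : Matrix (Fin n) (Fin n) ℝ}
    (hQ : Q.PosSemidef) (hM : M.PosSemidef) : 0 ≤ (Q * M).trace := by
  obtain ⟨S, hSpsd, hSS⟩ : ∃ S : Matrix (Fin n) (Fin n) ℝ, S.PosSemidef ∧ S * S = Q :=
    (open scoped MatrixOrder in ⟨CFC.sqrt Q, (CFC.sqrt_nonneg Q).posSemidef, CFC.sqrt_mul_sqrt_self Q hQ.nonneg⟩)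
  have h2 : (Q * M).trace = (Sᴴ * M * S).trace := by
    rw [hSpsd.isHermitian.eq, ← hSS, Matrix.mul_assoc, trace_mul_comm, Matrix.mul_assoc]
  rw [h2]
  exact trace_nonneg_of_psd (hM.conjTranspose_mul_mul_same S)

lemma border_psd {n : ℕ} {x : Fin n → ℝ} {X : Matrix (Fin n) (Fin n) ℝ}
    (h : IsCP (border x X)) : (border x X).PosSemidef := by
  obtain ⟨r, A, -, hA⟩ := h
  rw [hA]
  have : Aᵀ = Aᴴ := by ext i j; simp [conjTranspose_apply]
  rw [this]
  exact posSemidef_self_mul_conjTranspose A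

lemma schur_psd {n : ℕ} {x : Fin n → ℝ} {X : Matrix (Fin n) (Fin n) ℝ}
    (h : IsCP (border x X)) : (X - vecMulVec x x).PosSemidef := by
  have hM := border_psd h
  refine PosSemidef.of_dotProduct_mulVec_nonneg ?_ ?_
  · have hX : X.PosSemidef := by
      have := hM.submatrix Sum.inr
      convert this using 2
      ext i j; rfl
    have h1 : X.IsHermitian := hX.isHermitian
    have h2 : (vecMulVec x x).IsHermitian := by
      ext i j; simp [conjTranspose_apply, vecMulVec_apply, mul_comm]
    exact h1.sub h2
  · intro u
    have := hM.dotProduct_mulVec_nonneg (Sum.elim (fun _ => -(x ⬝ᵥ u)) u)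
    simp only [star_trivial] at this ⊢
    have key : Sum.elim (fun _ => -(x ⬝ᵥ u)) u ⬝ᵥ (border x X) *ᵥ Sum.elim (fun _ => -(x ⬝ᵥ u)) u
        = u ⬝ᵥ (X - vecMulVec x x) *ᵥ u := by
      simp [border, dotProduct, mulVec, Fintype.sum_sum_type, fromBlocks,
        vecMulVec_apply, Matrix.sub_apply, Finset.sum_sub_distrib, Finset.mul_sum,
        Finset.sum_mul]
      refine Finset.sum_congr rfl fun i _ => ?_
      simp [mul_sub, sub_mul, Finset.mul_sum, Finset.sum_sub_distrib]
      rw [mul_add, mul_neg, Finset.mul_sum, Finset.mul_sum, neg_add_eq_sub]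
      congr 1 <;> exact Finset.sum_congr rfl fun j _ => by ring
    rw [← key]; exact this

lemma trace_mul_vecMulVec {n : ℕ} (Q : Matrix (Fin n) (Fin n) ℝ) (y : Fin n → ℝ) :
    (Q * vecMulVec y y).trace = y ⬝ᵥ (Q *ᵥ y) := by
  simp [Matrix.trace, Matrix.mul_apply, vecMulVec_apply, dotProduct, mulVec, diag,
    Finset.mul_sum]
  exact Finset.sum_congr rfl fun i _ => Finset.sum_congr rfl fun j _ => by ring

lemma vecMulVec_quad {n : ℕ} (y u : Fin n → ℝ) :
    u ⬝ᵥ (vecMulVec y y *ᵥ u) = (y ⬝ᵥ u) ^ 2 := by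
  simp [dotProduct, mulVec, vecMulVec_apply, Finset.mul_sum, Finset.sum_mul, sq]
  exact Finset.sum_congr rfl fun i _ => Finset.sum_congr rfl fun j _ => by ring

lemma isCP_border_vecMulVec {n : ℕ} {y : Fin n → ℝ} (hy : ∀ i, 0 ≤ y i) :
    IsCP (border y (vecMulVec y y)) := by
  refine ⟨1, Matrix.of fun p (_ : Fin 1) => Sum.elim (fun _ => (1:ℝ)) y p, ?_, ?_⟩
  · rintro (i|i) j
    · simp
    · simp [hy i]
  · ext (p|p) (q|q) <;>
      simp [border, fromBlocks, Matrix.mul_apply, Fin.sum_univ_one, vecMulVec_apply,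
        Matrix.one_apply]

/-- if `(x*, X*)` is optimal for `P_o^CPP`, `Q` is positive semidefinite,
and `x*` is feasible for `P^MBQP`, then `x*` is optimal for `P^MBQP`. -/
theorem cppo_optimal_feasible_implies_mbqp_optimal {n m : ℕ}
    (Q : Matrix (Fin n) (Fin n) ℝ) (hQ : Q.PosSemidef) (c : Fin n → ℝ)
    (a : Fin m → Fin n → ℝ) (b : Fin m → ℝ) (B : Set (Fin n))
    (xs : Fin n → ℝ) (Xs : Matrix (Fin n) (Fin n) ℝ)
    (hfeas : CPPoFeas a b B xs Xs)
    (hopt : ∀ y Y, CPPoFeas a b B y Y → CPPoObj Q c xs Xs ≤ CPPoObj Q c y Y)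
    (hxfeas : MBQPFeas a b B xs) :
    MBQPFeas a b B xs ∧ ∀ y, MBQPFeas a b B y → MBQPObj Q c xs ≤ MBQPObj Q c y := by
  refine ⟨hxfeas, fun y hy => ?_⟩
  obtain ⟨hya, hyB, hynn⟩ := hy
  -- (y, y yᵀ) is feasible for the CPP
  have hYfeas : CPPoFeas a b B y (vecMulVec y y) := by
    refine ⟨hya, fun j => ?_, fun k hk => ?_, isCP_border_vecMulVec hynn⟩
    · rw [vecMulVec_quad, dotProduct_comm, hya j]
    · rcases hyB k hk with h | h <;> simp [vecMulVec_apply, h]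
  -- CPP objective at (y, y yᵀ) equals MBQP objective at y
  have hobjY : CPPoObj Q c y (vecMulVec y y) = MBQPObj Q c y := by
    unfold CPPoObj MBQPObj
    rw [trace_mul_vecMulVec]
  -- MBQP objective at xs is at most the CPP objective at (xs, Xs)
  have hlow : MBQPObj Q c xs ≤ CPPoObj Q c xs Xs := by
    unfold CPPoObj MBQPObj
    have h1 : 0 ≤ (Q * (Xs - vecMulVec xs xs)).trace :=
      trace_mul_nonneg hQ (schur_psd hfeas.2.2.2)
    rw [Matrix.mul_sub, trace_sub, trace_mul_vecMulVec] at h1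
    linarith
  calc MBQPObj Q c xs ≤ CPPoObj Q c xs Xs := hlow
    _ ≤ CPPoObj Q c y (vecMulVec y y) := hopt _ _ hYfeas
    _ = MBQPObj Q c y := hobjY
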